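/- Let R be a commutative Noetherian local ring and B, C semidualizing R-modules such that B is totally C-reflexive. Then Hom_R(B,C) is a semidualizing R-module. -/

import Mathlib

open CategoryTheory

/-- The Ext group `Ext^n_R(M, N)`. -/
noncomputable def ExtMod (R : Type) [CommRing R] (M N : Type) [AddCommGroup M] [Module R M]
    [AddCommGroup N] [Module R N] (n : ℕ) : Type :=
  ((Ext R (ModuleCat R) n).obj (Opposite.op (ModuleCat.of R M))).obj (ModuleCat.of R N)

/-- The Tor group `Tor_n^R(M, N)`. -/
noncomputable def TorMod (R : Type) [CommRing R] (M N : Type) [AddCommGroup M] [Module R M]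
    [AddCommGroup N] [Module R N] (n : ℕ) : Type :=
  ((Tor (ModuleCat R) n).obj (ModuleCat.of R M)).obj (ModuleCat.of R N)

/-- `C` is a semidualizing `R`-module: it is finitely generated, the homothety map
`R → Hom_R(C, C)` is bijective, and `Ext^i_R(C, C) = 0` for all `i ≥ 1`. -/
def IsSemidualizing (R : Type) [CommRing R] (C : Type) [AddCommGroup C] [Module R C] : Prop :=
  Module.Finite R C ∧ Function.Bijective (LinearMap.lsmul R C) ∧
    ∀ n : ℕ, 1 ≤ n → Subsingleton (ExtMod R C C n)

/-- `M` is totally `C`-reflexive: it is finitely generated, the biduality map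
`M → Hom_R(Hom_R(M, C), C)` is bijective, and
`Ext^{≥1}_R(M, C) = 0 = Ext^{≥1}_R(Hom_R(M, C), C)`. -/
def IsTotallyReflexive (R : Type) [CommRing R] (C : Type) [AddCommGroup C] [Module R C]
    (M : Type) [AddCommGroup M] [Module R M] : Prop :=
  Module.Finite R M ∧
  Function.Bijective (LinearMap.id.flip : M →ₗ[R] (M →ₗ[R] C) →ₗ[R] C) ∧
  (∀ n : ℕ, 1 ≤ n → Subsingleton (ExtMod R M C n)) ∧
  (∀ n : ℕ, 1 ≤ n → Subsingleton (ExtMod R (M →ₗ[R] C) C n))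

section Aux

lemma isZero_iff_subsingleton {R : Type} [CommRing R] (M : ModuleCat R) :
    Limits.IsZero M ↔ Subsingleton M := by
  constructor
  · intro h
    refine ⟨fun a b => ?_⟩
    have h1 : (𝟙 M) = 0 := h.eq_of_src _ _
    calc a = (𝟙 M : M ⟶ M).hom a := rfl
    _ = (0 : M ⟶ M).hom a := by rw [← h1]
    _ = (0 : M ⟶ M).hom b := rfl
    _ = (𝟙 M : M ⟶ M).hom b := by rw [← h1]
    _ = b := rfl
  · intro h
    exact ModuleCat.isZero_of_subsingleton M


lemma ext_subsingleton_iff {R : Type} [CommRing R] {M N : Type} [AddCommGroup M] [Module R M]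
    [AddCommGroup N] [Module R N] (P : ProjectiveResolution (ModuleCat.of R M)) (n : ℕ) :
    Subsingleton (ExtMod R M N (n+1)) ↔
      ∀ f : (P.complex.X (n+1) →ₗ[R] N), f.comp (P.complex.d (n+2) (n+1)).hom = 0 →
        ∃ g : (P.complex.X n →ₗ[R] N), g.comp (P.complex.d (n+1) n).hom = f := by
  have e := (P.isoExt (R := R) (n+1) (ModuleCat.of R N)).toLinearEquiv.toEquiv
  rw [show Subsingleton (ExtMod R M N (n+1)) ↔ _ from Equiv.subsingleton_congr e]
  rw [← isZero_iff_subsingleton, ← HomologicalComplex.exactAt_iff_isZero_homology]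
  rw [HomologicalComplex.exactAt_iff' _ n (n+1) (n+2) (by simp) (by simp)]
  rw [ShortComplex.moduleCat_exact_iff]
  constructor
  · intro h f hf
    obtain ⟨g, hg⟩ := h (ModuleCat.ofHom f) (ModuleCat.hom_ext hf)
    exact ⟨g.hom, congrArg ModuleCat.Hom.hom hg⟩
  · intro h f hf
    obtain ⟨g, hg⟩ := h f.hom (congrArg ModuleCat.Hom.hom hf)
    exact ⟨ModuleCat.ofHom g, ModuleCat.hom_ext hg⟩

/-- Factor a linear map through a surjection whose kernel it kills. -/
lemma factor_through_surjective {R : Type} [CommRing R] {A B Z : Type} [AddCommGroup A] [Module R A]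
    [AddCommGroup B] [Module R B] [AddCommGroup Z] [Module R Z]
    (p : A →ₗ[R] B) (hp : Function.Surjective p) (c : A →ₗ[R] Z)
    (h : ∀ a, p a = 0 → c a = 0) : ∃ cbar : B →ₗ[R] Z, cbar.comp p = c := by
  have key : ∀ a a', p a = p a' → c a = c a' := by
    intro a a' hpa
    have := h (a - a') (by rw [map_sub, hpa, sub_self])
    rw [map_sub, sub_eq_zero] at this
    exact this
  refine ⟨{ toFun := fun b => c (hp b).choose
            map_add' := ?_
            map_smul' := ?_ }, ?_⟩
  · intro b₁ b₂
    rw [← map_add]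
    exact key _ _ (by rw [map_add, (hp b₁).choose_spec, (hp b₂).choose_spec,
      (hp (b₁ + b₂)).choose_spec])
  · intro r b
    simp only [RingHom.id_apply]
    rw [← map_smul]
    exact key _ _ (by rw [map_smul, (hp b).choose_spec, (hp (r • b)).choose_spec])
  · ext a
    exact key _ _ (hp (p a)).choose_spec


lemma finite_hom (R : Type) [CommRing R] [IsNoetherianRing R] (M N : Type)
    [AddCommGroup M] [Module R M] [AddCommGroup N] [Module R N]
    [Module.Finite R M] [Module.Finite R N] : Module.Finite R (M →ₗ[R] N) := by
  obtain ⟨k, p, hp⟩ := Module.Finite.exists_fin' R M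
  have : IsNoetherian R ((Fin k → R) →ₗ[R] N) := by
    have : Module.Finite R ((Fin k → R) →ₗ[R] N) := Module.Finite.linearMap _ _ _ _
    exact isNoetherian_of_isNoetherianRing_of_finite R _
  exact Module.Finite.of_injective (LinearMap.lcomp R N p)
    (fun f g h => by
      ext m
      obtain ⟨x, rfl⟩ := hp m
      exact congrArg (fun φ => φ x) h)

lemma lsmul_bij (R : Type) [CommRing R] (B C : Type) [AddCommGroup B] [Module R B]
    [AddCommGroup C] [Module R C]
    (hB2 : Function.Bijective (LinearMap.lsmul R B))
    (hd : Function.Bijective (LinearMap.id.flip : B →ₗ[R] (B →ₗ[R] C) →ₗ[R] C)) :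
    Function.Bijective (LinearMap.lsmul R (B →ₗ[R] C)) := by
  set d : B →ₗ[R] (B →ₗ[R] C) →ₗ[R] C := LinearMap.id.flip with hdd
  constructor
  · intro r₁ r₂ h
    apply hB2.1
    ext b
    apply hd.1
    ext φ
    have := congrArg (fun ψ => (ψ φ) b) h
    simpa [d] using this
  · intro f
    set e := LinearEquiv.ofBijective d hd with he
    set u : B →ₗ[R] ((B →ₗ[R] C) →ₗ[R] C) := (LinearMap.lcomp R C f).comp d with hu
    obtain ⟨r, hr⟩ := hB2.2 ((e.symm : ((B →ₗ[R] C) →ₗ[R] C) →ₗ[R] B).comp u)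
    refine ⟨r, ?_⟩
    ext φ b
    have h1 : d (r • b) = u b := by
      have := congrArg (fun ψ => ψ b) hr
      simp only [LinearMap.lsmul_apply, LinearMap.comp_apply] at this
      calc d (r • b) = e (r • b) := rfl
      _ = e (e.symm (u b)) := by exact congrArg e this
      _ = u b := e.apply_symm_apply _
    have := congrArg (fun ψ => ψ φ) h1
    simp only [hu, LinearMap.comp_apply, LinearMap.lcomp_apply, hdd,
      LinearMap.flip_apply, LinearMap.id_apply] at this
    calc (((LinearMap.lsmul R (B →ₗ[R] C)) r) φ) b = (r • φ) b := rfl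
    _ = r • (φ b) := rfl
    _ = φ (r • b) := (map_smul φ r b).symm
    _ = (f φ) b := this


section QE
variable {R : Type} [CommRing R] {W : Type} [AddCommGroup W] [Module R W]
variable (Q : ProjectiveResolution (ModuleCat.of R W))

/-- modules in a projective resolution are projective modules -/
lemma qproj (i : ℕ) : Module.Projective R (Q.complex.X i) := by
  rw [IsProjective.iff_projective]
  exact (inferInstance : Projective (Q.complex.X i))

/-- Exactness of the complex `Hom(Q, Y)` at position `n+1`. -/
def QExact (Y : Type) [AddCommGroup Y]
    [Module R Y] (n : ℕ) : Prop :=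
  ∀ f : (Q.complex.X (n+1) →ₗ[R] Y), f.comp (Q.complex.d (n+2) (n+1)).hom = 0 →
    ∃ g : (Q.complex.X n →ₗ[R] Y), g.comp (Q.complex.d (n+1) n).hom = f

lemma chase {Y Y' Y'' : Type}
    [AddCommGroup Y] [Module R Y] [AddCommGroup Y'] [Module R Y']
    [AddCommGroup Y''] [Module R Y'']
    (ι : Y' →ₗ[R] Y) (π : Y →ₗ[R] Y'')
    (hι : Function.Injective ι)
    (hexact : ∀ y : Y, π y = 0 → ∃ y', ι y' = y) (hmid : ∀ y', π (ι y') = 0)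
    (n : ℕ) (hB : QExact Q Y n)
    (hlift : ∀ c : (Q.complex.X n →ₗ[R] Y''), c.comp (Q.complex.d (n+1) n).hom = 0 →
      ∃ b : (Q.complex.X n →ₗ[R] Y), π.comp b = c ∧ b.comp (Q.complex.d (n+1) n).hom = 0) :
    QExact Q Y' n := by
  intro f hf
  obtain ⟨b, hb⟩ := hB (ι.comp f) (by rw [LinearMap.comp_assoc, hf, LinearMap.comp_zero])
  obtain ⟨b', hb'1, hb'2⟩ := hlift (π.comp b) (by
    rw [LinearMap.comp_assoc, hb, ← LinearMap.comp_assoc]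
    ext x; exact hmid (f x))
  -- b - b' factors through ι
  have hmem : ∀ q, (b - b') q ∈ LinearMap.range ι := by
    intro q
    obtain ⟨y', hy'⟩ := hexact ((b - b') q) (by
      have := congrArg (fun φ => φ q) hb'1
      simp only [LinearMap.comp_apply] at this
      simp [this])
    exact ⟨y', hy'⟩
  set eι := LinearEquiv.ofInjective ι hι with heι
  set a' : Q.complex.X n →ₗ[R] Y' :=
    (eι.symm : LinearMap.range ι →ₗ[R] Y').comp ((b - b').codRestrict (LinearMap.range ι) hmem)
    with ha'
  have hιa' : ι.comp a' = b - b' := by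
    ext q
    have : ι (eι.symm ⟨(b - b') q, hmem q⟩) = (b - b') q := by
      have h2 : eι (eι.symm ⟨(b - b') q, hmem q⟩) = ⟨(b - b') q, hmem q⟩ :=
        eι.apply_symm_apply _
      have h3 := congrArg Subtype.val h2
      rwa [heι, LinearEquiv.ofInjective_apply] at h3
    exact this
  refine ⟨a', ?_⟩
  have : ι.comp (a'.comp (Q.complex.d (n+1) n).hom) = ι.comp f := by
    rw [← LinearMap.comp_assoc, hιa', LinearMap.sub_comp, hb'2, sub_zero, hb]
  ext q
  exact hι (congrArg (fun φ => φ q) this)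

lemma QExact_congr {Y Y' : Type} [AddCommGroup Y] [Module R Y] [AddCommGroup Y'] [Module R Y']
    (t : Y ≃ₗ[R] Y') (n : ℕ) (h : QExact Q Y n) : QExact Q Y' n := by
  intro f hf
  obtain ⟨g, hg⟩ := h ((t.symm : Y' →ₗ[R] Y).comp f) (by
    rw [LinearMap.comp_assoc, hf, LinearMap.comp_zero])
  refine ⟨(t : Y →ₗ[R] Y').comp g, ?_⟩
  rw [LinearMap.comp_assoc, hg, ← LinearMap.comp_assoc]
  ext x
  simp
end QE

section Main
variable (R : Type) [CommRing R] (B C : Type) [AddCommGroup B] [Module R B]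
    [AddCommGroup C] [Module R C]

lemma ext_hom_self_vanish
    (hd : Function.Bijective (LinearMap.id.flip : B →ₗ[R] (B →ₗ[R] C) →ₗ[R] C))
    (hBB : ∀ n : ℕ, 1 ≤ n → Subsingleton (ExtMod R B B n))
    (hBCv : ∀ n : ℕ, 1 ≤ n → Subsingleton (ExtMod R B C n))
    (hDC : ∀ n : ℕ, 1 ≤ n → Subsingleton (ExtMod R (B →ₗ[R] C) C n)) :
    ∀ n : ℕ, 1 ≤ n → Subsingleton (ExtMod R (B →ₗ[R] C) (B →ₗ[R] C) n) := by
  have P := ProjectiveResolution.of (ModuleCat.of R B)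
  have Q := ProjectiveResolution.of (ModuleCat.of R (B →ₗ[R] C))
  set Pc := P.complex with hPc
  set Qc := Q.complex with hQc
  set d : B →ₗ[R] (B →ₗ[R] C) →ₗ[R] C := LinearMap.id.flip with hdd
  -- the dual complex of P
  set δ : ∀ j : ℕ, (Pc.X j →ₗ[R] C) →ₗ[R] (Pc.X (j+1) →ₗ[R] C) :=
    fun j => LinearMap.lcomp R C (Pc.d (j+1) j).hom with hδ
  set K : ∀ j : ℕ, Submodule R (Pc.X j →ₗ[R] C) := fun j => LinearMap.ker (δ j) with hK
  have hδδ : ∀ (j : ℕ) (g : Pc.X j →ₗ[R] C), δ (j+1) (δ j g) = 0 := by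
    intro j g
    show (g.comp (Pc.d (j+1) j).hom).comp (Pc.d (j+2) (j+1)).hom = 0
    rw [LinearMap.comp_assoc]
    have h0 : (Pc.d (j+1) j).hom.comp (Pc.d (j+2) (j+1)).hom = 0 :=
      congrArg ModuleCat.Hom.hom (Pc.d_comp_d (j+2) (j+1) j)
    rw [h0, LinearMap.comp_zero]
  -- exactness of the dual complex of P (uses Ext^{≥1}(B,C)=0)
  have F1 : ∀ j : ℕ, ∀ x : (Pc.X (j+1) →ₗ[R] C), δ (j+1) x = 0 → ∃ y, δ j y = x := by
    intro j
    exact (ext_subsingleton_iff P j).mp (hBCv (j+1) (Nat.le_add_left 1 j))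
  -- exactness of Hom(P, B) in positive degrees (uses Ext^{≥1}(B,B)=0)
  have F2 : ∀ j : ℕ, ∀ v : (Pc.X (j+1) →ₗ[R] B), v.comp (Pc.d (j+2) (j+1)).hom = 0 →
      ∃ w : (Pc.X j →ₗ[R] B), w.comp (Pc.d (j+1) j).hom = v := by
    intro j
    exact (ext_subsingleton_iff P j).mp (hBB (j+1) (Nat.le_add_left 1 j))
  -- exactness of Hom(Q, C) in positive degrees (uses Ext^{≥1}(B†,C)=0)
  have F3 : ∀ n : ℕ, ∀ f : (Qc.X (n+1) →ₗ[R] C), f.comp (Qc.d (n+2) (n+1)).hom = 0 →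
      ∃ g : (Qc.X n →ₗ[R] C), g.comp (Qc.d (n+1) n).hom = f := by
    intro n
    exact (ext_subsingleton_iff Q n).mp (hDC (n+1) (Nat.le_add_left 1 n))

  -- surjectivity data for P and Q at degree 0
  set π₀P : Pc.X 0 →ₗ[R] B := (P.π.f 0).hom with hπ₀P
  have hPsurj : Function.Surjective π₀P :=
    (ModuleCat.epi_iff_surjective (P.π.f 0)).mp inferInstance
  have hPker : ∀ x, π₀P x = 0 → ∃ y, Pc.d 1 0 y = x :=
    (ShortComplex.moduleCat_exact_iff _).mp P.exact₀
  have hPd10 : π₀P.comp (Pc.d 1 0).hom = 0 := congrArg ModuleCat.Hom.hom P.complex_d_comp_π_f_zero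
  set π₀Q : Qc.X 0 →ₗ[R] (B →ₗ[R] C) := (Q.π.f 0).hom with hπ₀Q
  have hQsurj : Function.Surjective π₀Q :=
    (ModuleCat.epi_iff_surjective (Q.π.f 0)).mp inferInstance
  have hQker : ∀ x, π₀Q x = 0 → ∃ y, Qc.d 1 0 y = x :=
    (ShortComplex.moduleCat_exact_iff _).mp Q.exact₀
  have hQd10 : π₀Q.comp (Qc.d 1 0).hom = 0 := congrArg ModuleCat.Hom.hom Q.complex_d_comp_π_f_zero
  -- Ext^{≥1}(B†, Hom(P_j, C)) = 0 : the complexes Hom(Q, Hom(P_j,C)) are exact in ≥1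
  have QI : ∀ (j n : ℕ), QExact Q (Pc.X j →ₗ[R] C) n := by
    intro j n f hf
    haveI : Module.Projective R (Pc.X j) := qproj P j
    have hLmem : ∀ g : (Qc.X n →ₗ[R] C),
        (LinearMap.lcomp R C (Qc.d (n+1) n).hom) g ∈
          LinearMap.ker (LinearMap.lcomp R C (Qc.d (n+2) (n+1)).hom) := by
      intro g
      rw [LinearMap.mem_ker]
      show (g.comp (Qc.d (n+1) n).hom).comp (Qc.d (n+2) (n+1)).hom = 0
      rw [LinearMap.comp_assoc]
      have h0 : (Qc.d (n+1) n).hom.comp (Qc.d (n+2) (n+1)).hom = 0 :=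
        congrArg ModuleCat.Hom.hom (Qc.d_comp_d (n+2) (n+1) n)
      rw [h0, LinearMap.comp_zero]
    set σ : (Qc.X n →ₗ[R] C) →ₗ[R]
        ↥(LinearMap.ker (LinearMap.lcomp R C (Qc.d (n+2) (n+1)).hom)) :=
      (LinearMap.lcomp R C (Qc.d (n+1) n).hom).codRestrict _ hLmem with hσdef
    have hσ : Function.Surjective σ := by
      rintro ⟨s, hs⟩
      obtain ⟨g, hg⟩ := F3 n s (LinearMap.mem_ker.mp hs)
      exact ⟨g, Subtype.ext hg⟩
    have hmem : ∀ p : Pc.X j, f.flip p ∈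
        LinearMap.ker (LinearMap.lcomp R C (Qc.d (n+2) (n+1)).hom) := by
      intro p
      rw [LinearMap.mem_ker]
      ext q
      exact congrArg (fun φ => (φ q) p) hf
    obtain ⟨h, hh⟩ := Module.projective_lifting_property σ
      (f.flip.codRestrict _ hmem) hσ
    refine ⟨h.flip, ?_⟩
    ext q p
    have := congrArg (fun ψ => ((ψ p : ↥(LinearMap.ker _)) : Qc.X (n+1) →ₗ[R] C) q) hh
    exact this
  -- Hom(B†, dual complex of P) is exact in positive degrees
  have HDI : ∀ j : ℕ, ∀ u : (B →ₗ[R] C) →ₗ[R] (Pc.X (j+1) →ₗ[R] C),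
      (δ (j+1)).comp u = 0 → ∃ h : (B →ₗ[R] C) →ₗ[R] (Pc.X j →ₗ[R] C),
        (δ j).comp h = u := by
    intro j u hu
    set e := LinearEquiv.ofBijective d hd with he
    set v : Pc.X (j+1) →ₗ[R] B :=
      (e.symm : ((B →ₗ[R] C) →ₗ[R] C) →ₗ[R] B).comp u.flip with hv
    have hv0 : v.comp (Pc.d (j+2) (j+1)).hom = 0 := by
      ext p
      have h1 : u.flip (Pc.d (j+2) (j+1) p) = 0 := by
        ext φ
        exact congrArg (fun ψ => (ψ φ : Pc.X (j+2) →ₗ[R] C) p) hu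
      show e.symm (u.flip (Pc.d (j+2) (j+1) p)) = 0
      rw [h1, map_zero]
    obtain ⟨w, hw⟩ := F2 j v hv0
    refine ⟨(d.comp w).flip, ?_⟩
    ext φ p
    have h2 : w (Pc.d (j+1) j p) = v p := congrArg (fun ψ => ψ p) hw
    show ((d.comp w).flip φ).comp (Pc.d (j+1) j).hom p = u φ p
    calc ((d.comp w).flip φ).comp (Pc.d (j+1) j).hom p = d (w (Pc.d (j+1) j p)) φ := rfl
    _ = d (v p) φ := by rw [h2]
    _ = (e (e.symm (u.flip p))) φ := rfl
    _ = u.flip p φ := by rw [e.apply_symm_apply]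
    _ = u φ p := rfl
  -- the short exact sequences 0 → K j → Hom(P_j,C) → K (j+1) → 0
  set π : ∀ j : ℕ, (Pc.X j →ₗ[R] C) →ₗ[R] ↥(K (j+1)) :=
    fun j => (δ j).codRestrict (K (j+1)) (fun g => LinearMap.mem_ker.mpr (hδδ j g)) with hπ
  have hπval : ∀ (j : ℕ) (g : Pc.X j →ₗ[R] C), ((π j g : ↥(K (j+1))) : _ →ₗ[R] C) = δ j g :=
    fun j g => rfl
  have hπsurj : ∀ j : ℕ, Function.Surjective (π j) := by
    intro j
    rintro ⟨x, hx⟩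
    obtain ⟨y, hy⟩ := F1 j x (LinearMap.mem_ker.mp hx)
    exact ⟨y, Subtype.ext hy⟩
  have hexact : ∀ j : ℕ, ∀ y : (Pc.X j →ₗ[R] C), π j y = 0 → ∃ y' : ↥(K j),
      (K j).subtype y' = y := by
    intro j y hy
    have : δ j y = 0 := congrArg Subtype.val hy
    exact ⟨⟨y, LinearMap.mem_ker.mpr this⟩, rfl⟩
  have hmid : ∀ j : ℕ, ∀ y' : ↥(K j), π j ((K j).subtype y') = 0 := by
    intro j y'
    exact Subtype.ext (LinearMap.mem_ker.mp y'.2)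
  -- the main induction
  have main : ∀ n j : ℕ, QExact Q (↥(K j)) n := by
    intro n
    induction n with
    | zero =>
      intro j
      apply chase Q ((K j).subtype) (π j) (Submodule.injective_subtype _)
        (hexact j) (hmid j) 0 (QI j 0)
      -- the lifting property in degree 0
      intro c hc
      obtain ⟨cbar, hcbar⟩ := factor_through_surjective π₀Q hQsurj c (by
        intro a ha
        obtain ⟨y, hy⟩ := hQker a ha
        rw [← hy]
        exact congrArg (fun ψ => ψ y) hc)
      have hu : (δ (j+1)).comp ((K (j+1)).subtype.comp cbar) = 0 := by
        ext φ p
        exact congrArg (fun (ψ : Pc.X (j+2) →ₗ[R] C) => ψ p)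
          ((cbar φ).2 : (δ (j+1)) ((cbar φ : _ →ₗ[R] C)) = 0)
      obtain ⟨h, hh⟩ := HDI j ((K (j+1)).subtype.comp cbar) hu
      refine ⟨h.comp π₀Q, ?_, ?_⟩
      · ext x y
        calc (((π j) ((h.comp π₀Q) x) : ↥(K (j+1))) : _ →ₗ[R] C) y
            = (((δ j).comp h) (π₀Q x)) y := rfl
        _ = (((K (j+1)).subtype.comp cbar) (π₀Q x)) y := by rw [hh]
        _ = ((cbar (π₀Q x) : ↥(K (j+1))) : _ →ₗ[R] C) y := rfl
        _ = ((c x : ↥(K (j+1))) : _ →ₗ[R] C) y := by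
            rw [show cbar (π₀Q x) = c x from congrArg (fun ψ => ψ x) hcbar]
      · rw [LinearMap.comp_assoc, hQd10, LinearMap.comp_zero]
    | succ n IH =>
      intro j
      apply chase Q ((K j).subtype) (π j) (Submodule.injective_subtype _)
        (hexact j) (hmid j) (n+1) (QI j (n+1))
      intro c hc
      obtain ⟨c₀, hc₀⟩ := IH (j+1) c hc
      haveI : Module.Projective R (Qc.X n) := qproj Q n
      obtain ⟨b₀, hb₀⟩ :=
        Module.projective_lifting_property (R := R) (M := (Pc.X j →ₗ[R] C))
          (N := ↥(K (j+1))) (P := (Qc.X n : Type)) (π j) c₀ (hπsurj j)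
      refine ⟨b₀.comp (Qc.d (n+1) n).hom, ?_, ?_⟩
      · rw [← LinearMap.comp_assoc, hb₀, hc₀]
      · rw [LinearMap.comp_assoc]
        have h0 : (Qc.d (n+1) n).hom.comp (Qc.d (n+2) (n+1)).hom = 0 :=
          congrArg ModuleCat.Hom.hom (Qc.d_comp_d (n+2) (n+1) n)
        rw [h0, LinearMap.comp_zero]
  -- identify K 0 with B†
  have hεmem : ∀ f : (B →ₗ[R] C), (LinearMap.lcomp R C π₀P) f ∈ K 0 := by
    intro f
    rw [LinearMap.mem_ker]
    show (f.comp π₀P).comp (Pc.d 1 0).hom = 0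
    rw [LinearMap.comp_assoc, hPd10, LinearMap.comp_zero]
  set ε' : (B →ₗ[R] C) →ₗ[R] ↥(K 0) :=
    (LinearMap.lcomp R C π₀P).codRestrict (K 0) hεmem with hε'
  have hbij : Function.Bijective ε' := by
    constructor
    · intro f g hfg
      have h1 : f.comp π₀P = g.comp π₀P := congrArg Subtype.val hfg
      ext b
      obtain ⟨x, rfl⟩ := hPsurj b
      exact congrArg (fun ψ => ψ x) h1
    · rintro ⟨g, hg⟩
      obtain ⟨f, hf⟩ := factor_through_surjective π₀P hPsurj g (by
        intro x hx
        obtain ⟨y, hy⟩ := hPker x hx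
        rw [← hy]
        exact congrArg (fun (ψ : Pc.X 1 →ₗ[R] C) => ψ y) (LinearMap.mem_ker.mp hg))
      exact ⟨f, Subtype.ext hf⟩
  have tQE : ∀ n : ℕ, QExact Q (B →ₗ[R] C) n := by
    intro n
    exact QExact_congr Q (LinearEquiv.ofBijective ε' hbij).symm n (main n 0)
  intro n hn
  obtain ⟨m, rfl⟩ : ∃ m, n = m + 1 := ⟨n - 1, (Nat.succ_pred_eq_of_pos hn).symm⟩
  exact (ext_subsingleton_iff Q m).mpr (tQE m)

end Main

end Aux

/-- if `B`, `C` are semidualizing and `B` is totally `C`-reflexive, then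
`Hom_R(B, C)` is semidualizing. -/
theorem hom_semidualizing_of_totallyReflexive
    (R : Type) [CommRing R] [IsNoetherianRing R] [IsLocalRing R]
    (B C : Type) [AddCommGroup B] [Module R B] [AddCommGroup C] [Module R C]
    (hB : IsSemidualizing R B) (hC : IsSemidualizing R C)
    (hBC : IsTotallyReflexive R C B) :
    IsSemidualizing R (B →ₗ[R] C) := by
  haveI := hB.1
  haveI := hC.1
  refine ⟨finite_hom R B C, lsmul_bij R B C hB.2.1 hBC.2.1, ?_⟩
  exact ext_hom_self_vanish R B C hBC.2.1 hB.2.2 hBC.2.2.1 hBC.2.2.2
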